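/- Let C ⊆ ℙ^r be a projective scheme of dimension 1 and degree d > 0. Then p_a(C) ≤ (d−1 choose 2). -/

import Mathlib

open MvPolynomial

attribute [local instance] MvPolynomial.gradedAlgebra


open Finset

namespace KKW

/-- total degree of an exponent vector -/
def dsum {n : ℕ} (μ : Fin n → ℕ) : ℕ := ∑ j, μ j

/-- lower shadow of a set of exponent vectors -/
def shad {n : ℕ} (B : Finset (Fin n → ℕ)) : Finset (Fin n → ℕ) :=
  B.biUnion (fun μ => (Finset.univ.filter (fun l => 0 < μ l)).image
    (fun l => Function.update μ l (μ l - 1)))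

theorem mem_shad_iff {n : ℕ} {B : Finset (Fin n → ℕ)} {ν : Fin n → ℕ} :
    ν ∈ shad B ↔ ∃ l, Function.update ν l (ν l + 1) ∈ B := by
  constructor
  · rintro h
    rcases Finset.mem_biUnion.1 h with ⟨μ, hμ, h2⟩
    rcases Finset.mem_image.1 h2 with ⟨l, hl, rfl⟩
    rcases Finset.mem_filter.1 hl with ⟨-, hlpos⟩
    refine ⟨l, ?_⟩
    have : Function.update (Function.update μ l (μ l - 1)) l
        ((Function.update μ l (μ l - 1)) l + 1) = μ := by
      rw [Function.update_self, Function.update_idem]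
      rw [Nat.sub_add_cancel hlpos, Function.update_eq_self]
    rwa [this]
  · rintro ⟨l, hl⟩
    apply Finset.mem_biUnion.2
    refine ⟨_, hl, ?_⟩
    apply Finset.mem_image.2
    refine ⟨l, Finset.mem_filter.2 ⟨Finset.mem_univ _, by simp⟩, ?_⟩
    simp [Function.update_idem]

theorem dsum_update_succ {n : ℕ} (ν : Fin n → ℕ) (l : Fin n) :
    dsum (Function.update ν l (ν l + 1)) = dsum ν + 1 := by
  unfold dsum
  rw [Finset.sum_update_of_mem (Finset.mem_univ l)]
  rw [← Finset.add_sum_erase _ ν (Finset.mem_univ l), Finset.sdiff_singleton_eq_erase]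
  omega

theorem dsum_shad {n : ℕ} {B : Finset (Fin n → ℕ)} {D : ℕ}
    (hB : ∀ μ ∈ B, dsum μ = D) {ν : Fin n → ℕ} (hν : ν ∈ shad B) :
    dsum ν + 1 = D := by
  rcases mem_shad_iff.1 hν with ⟨l, hl⟩
  have := hB _ hl
  rwa [dsum_update_succ] at this

/-- slice of a set by the value of the last coordinate -/
def slc {n : ℕ} (C : Finset (Fin (n+1) → ℕ)) (k : ℕ) : Finset (Fin n → ℕ) :=
  (C.filter (fun μ => μ (Fin.last n) = k)).image (Fin.init)

theorem mem_slc_iff {n : ℕ} {C : Finset (Fin (n+1) → ℕ)} {k : ℕ} {ν : Fin n → ℕ} :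
    ν ∈ slc C k ↔ Fin.snoc ν k ∈ C := by
  constructor
  · rintro h
    rcases Finset.mem_image.1 h with ⟨μ, hμ, rfl⟩
    rcases Finset.mem_filter.1 hμ with ⟨hμC, hμk⟩
    rwa [← hμk, Fin.snoc_init_self]
  · intro h
    apply Finset.mem_image.2
    refine ⟨Fin.snoc ν k, Finset.mem_filter.2 ⟨h, by simp⟩, by simp [Fin.init_snoc]⟩

theorem card_slc_sum {n : ℕ} (C : Finset (Fin (n+1) → ℕ)) (E : ℕ)
    (hC : ∀ μ ∈ C, dsum μ = E) :
    C.card = ∑ k ∈ Finset.range (E+1), (slc C k).card := by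
  rw [Finset.card_eq_sum_card_fiberwise (f := fun μ => μ (Fin.last n))
    (t := Finset.range (E+1))]
  · apply Finset.sum_congr rfl
    intro k _
    unfold slc
    rw [Finset.card_image_of_injOn]
    intro μ hμ μ' hμ' hinit
    rcases Finset.mem_filter.1 hμ with ⟨-, h1⟩
    rcases Finset.mem_filter.1 hμ' with ⟨-, h2⟩
    rw [← Fin.snoc_init_self μ, ← Fin.snoc_init_self μ', hinit, h1, h2]
  · intro μ hμ
    apply Finset.mem_range.2
    have h1 : μ (Fin.last n) ≤ dsum μ := Finset.single_le_sum (fun _ _ => Nat.zero_le _) (Finset.mem_univ _)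
    have h2 := hC μ hμ
    dsimp only
    omega

theorem dsum_snoc {n : ℕ} (ν : Fin n → ℕ) (k : ℕ) :
    dsum (Fin.snoc ν k : Fin (n+1) → ℕ) = dsum ν + k := by
  unfold dsum
  rw [Fin.sum_univ_castSucc]
  simp [Fin.snoc_castSucc, Fin.snoc_last]

theorem shad_slc_subset {n : ℕ} (B : Finset (Fin (n+1) → ℕ)) (k : ℕ) :
    shad (slc B k) ⊆ slc (shad B) k := by
  intro ν hν
  rcases mem_shad_iff.1 hν with ⟨l, hl⟩
  rw [mem_slc_iff] at hl ⊢
  apply mem_shad_iff.2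
  refine ⟨Fin.castSucc l, ?_⟩
  have h1 : (Fin.snoc ν k : Fin (n+1) → ℕ) (Fin.castSucc l) = ν l := Fin.snoc_castSucc ..
  rw [h1, ← Fin.snoc_update]
  exact hl

theorem slc_succ_subset {n : ℕ} (B : Finset (Fin (n+1) → ℕ)) (k : ℕ) :
    slc B (k+1) ⊆ slc (shad B) k := by
  intro ν hν
  rw [mem_slc_iff] at hν ⊢
  apply mem_shad_iff.2
  refine ⟨Fin.last n, ?_⟩
  have h1 : (Fin.snoc ν k : Fin (n+1) → ℕ) (Fin.last n) = k := Fin.snoc_last ..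
  rw [h1, Fin.update_snoc_last]
  exact hν



/-- capped value function: the minimal cardinality of a degree-`D` monomial set whose
shadow drops by `t`, times... actually `Vfun D t = 2 * (minimal cardinality)`. -/
def Vfun (D : ℕ) (t : ℤ) : ℤ :=
  (max 0 (min t (D+1))) * (2*D + 3 - (max 0 (min t (D+1))))

theorem Vfun_nonneg (D : ℕ) (t : ℤ) : 0 ≤ Vfun D t := by
  unfold Vfun
  have h1 : (0:ℤ) ≤ max 0 (min t (D+1)) := le_max_left _ _
  have h2 : max 0 (min t (D+1)) ≤ (D:ℤ)+1 := by
    apply max_le (by positivity) (min_le_right _ _)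
  nlinarith

theorem Vfun_mono (D : ℕ) {t u : ℤ} (h : t ≤ u) : Vfun D t ≤ Vfun D u := by
  unfold Vfun
  set a := max 0 (min t (D+1)) with ha
  set b := max 0 (min u (D+1)) with hb
  have hab : a ≤ b := by
    apply max_le_max le_rfl (min_le_min h le_rfl)
  have h1 : (0:ℤ) ≤ a := le_max_left _ _
  have h2 : a ≤ (D:ℤ)+1 := max_le (by positivity) (min_le_right _ _)
  have h3 : b ≤ (D:ℤ)+1 := max_le (by positivity) (min_le_right _ _)
  nlinarith

theorem Vfun_le_max (D : ℕ) (t : ℤ) : Vfun D t ≤ ((D:ℤ)+1) * ((D:ℤ)+2) := by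
  unfold Vfun
  have h1 : (0:ℤ) ≤ max 0 (min t (D+1)) := le_max_left _ _
  have h2 : max 0 (min t (D+1)) ≤ (D:ℤ)+1 := max_le (by positivity) (min_le_right _ _)
  nlinarith

/-- step1 : `Vfun E T ≤ 2 max(T,0) + Vfun (E-1) T` -/
theorem Vfun_step (E : ℕ) (hE : 1 ≤ E) (T : ℤ) :
    Vfun E T ≤ 2 * (max T 0) + Vfun (E-1) T := by
  have hcast : ((E-1 : ℕ) : ℤ) = (E:ℤ) - 1 := by
    rw [Nat.cast_sub hE]; simp
  set X := (E:ℤ) with hX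
  have hX1 : 1 ≤ X := by rw [hX]; exact_mod_cast hE
  unfold Vfun
  rw [hcast]
  have e1 : (X - 1) + 1 = X := by ring
  rw [e1]
  set a := max 0 (min T (X+1)) with ha
  set b := max 0 (min T X) with hb
  have h1 : (0:ℤ) ≤ a := le_max_left _ _
  have h2 : a ≤ X+1 := max_le (by linarith) (min_le_right _ _)
  have h0b : (0:ℤ) ≤ b := le_max_left _ _
  have h3 : b ≤ X := max_le (by linarith) (min_le_right _ _)
  have hTa : a ≤ max T 0 := by
    exact max_le (le_max_right _ _) ((min_le_left _ _).trans (le_max_left _ _))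
  -- relation: a ≤ b + 1 and if a ≤ X then a ≤ b
  have key : a ≤ b + 1 := by
    rcases le_or_gt T X with h | h
    · have : a ≤ max 0 T := max_le (le_max_left _ _) ((min_le_left _ _).trans (le_max_right _ _))
      have : b = max 0 T := by
        rw [hb, min_eq_left h]
      omega
    · have hbx : b = X := by rw [hb, min_eq_right (by linarith), max_eq_right (by linarith)]
      omega
  have key2 : a ≤ X → a ≤ b := by
    intro hax
    rcases le_or_gt T X with h | h
    · rw [hb, min_eq_left h]
      rcases le_or_gt T (X+1) with h' | h'
      · rw [ha, min_eq_left h']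
      · rw [ha, min_eq_right (by linarith), max_eq_right (by linarith)] at *; omega
    · exfalso
      have : a = X + 1 := by rw [ha, min_eq_right (by linarith), max_eq_right (by linarith)]
      omega
  rcases le_or_gt a X with hax | hax
  · have hab := key2 hax
    have : b * (2*(X-1) + 3 - b) ≥ a * (2*X + 1 - a) := by nlinarith
    nlinarith
  · -- a = X + 1, b = X
    have ha' : a = X + 1 := le_antisymm h2 hax
    have hb' : b = X := by
      have : X + 1 ≤ min T (X+1) := by
        rcases max_cases 0 (min T (X+1)) with ⟨h4, h5⟩ | ⟨h4, h5⟩ <;> omega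
      have hTX : X ≤ T := by
        have := min_le_left T (X+1); omega
      rw [hb, min_eq_right hTX, max_eq_right (by linarith)]
    have hTmax : X + 1 ≤ max T 0 := by
      have : X + 1 ≤ min T (X+1) := by
        rcases max_cases 0 (min T (X+1)) with ⟨h4, h5⟩ | ⟨h4, h5⟩ <;> omega
      have := min_le_left T (X+1)
      have := le_max_left T 0
      omega
    rw [ha', hb']
    nlinarith

/-- step2 : superadditivity for `m ≥ 1` -/
theorem Vfun_super (E : ℕ) (hE : 1 ≤ E) (m t' : ℤ) (hm : 1 ≤ m) :
    Vfun E (m + t') ≤ Vfun E m + Vfun (E-1) t' := by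
  have hcast : ((E-1 : ℕ) : ℤ) = (E:ℤ) - 1 := by
    rw [Nat.cast_sub hE]; simp
  set X := (E:ℤ) with hX
  have hX1 : 1 ≤ X := by rw [hX]; exact_mod_cast hE
  rcases le_or_gt t' 0 with ht | ht
  · calc Vfun E (m + t') ≤ Vfun E m := Vfun_mono _ (by linarith)
    _ ≤ Vfun E m + Vfun (E-1) t' := by
        have := Vfun_nonneg (E-1) t'; linarith
  · rcases le_or_gt (X+1) m with hmX | hmX
    · -- Vfun E m is maximal
      have h1 : Vfun E m = (X+1)*(X+2) := by
        unfold Vfun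
        rw [min_eq_right (by push_cast; linarith), max_eq_right (by linarith)]
        try push_cast; try ring
      calc Vfun E (m+t') ≤ (X+1)*(X+2) := Vfun_le_max E (m+t')
      _ ≤ Vfun E m + Vfun (E-1) t' := by
            have := Vfun_nonneg (E-1) t'; linarith
    · -- 1 ≤ m ≤ X
      have hVm : Vfun E m = m * (2*X + 3 - m) := by
        unfold Vfun
        rw [min_eq_left (by push_cast; linarith), max_eq_right (by linarith)]
        try push_cast; try ring
      rcases le_or_gt X t' with htX | htX
      · -- t' ≥ X : Vfun (E-1) t' maximal = X(X+1)
        have h2 : Vfun (E-1) t' = X*(X+1) := by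
          unfold Vfun
          rw [hcast]
          rw [min_eq_right (by linarith), max_eq_right (by linarith)]
          ring
        have h3 : Vfun E (m+t') ≤ (X+1)*(X+2) := Vfun_le_max E (m+t')
        rw [hVm, h2]
        nlinarith
      · -- t' ≤ X - 1
        have hVt : Vfun (E-1) t' = t' * (2*X + 1 - t') := by
          unfold Vfun
          rw [hcast]
          have : min t' ((X-1)+1) = t' := min_eq_left (by linarith)
          rw [this, max_eq_right (by linarith)]
          ring
        rcases le_or_gt (m + t') (X+1) with hs | hs
        · have hVT : Vfun E (m+t') = (m+t') * (2*X+3 - (m+t')) := by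
            unfold Vfun
            rw [min_eq_left (by push_cast; linarith), max_eq_right (by linarith)]
            try push_cast; try ring
          rw [hVT, hVm, hVt]
          nlinarith
        · have hVT : Vfun E (m+t') = (X+1)*(X+2) := by
            unfold Vfun
            rw [min_eq_right (by push_cast; linarith), max_eq_right (by linarith)]
            try push_cast; try ring
          rw [hVT, hVm, hVt]
          nlinarith [mul_nonneg (by linarith : (0:ℤ) ≤ m - 1) (by linarith : (0:ℤ) ≤ X - m),
            mul_nonneg (by linarith : (0:ℤ) ≤ t' - 1) (by linarith : (0:ℤ) ≤ X - 1 - t'),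
            mul_nonneg (by linarith : (0:ℤ) ≤ m + t' - X - 2) (by linarith : (0:ℤ) ≤ X - m)]

theorem core (E : ℕ) (hE : 1 ≤ E) (m t' bk F : ℤ) (hbk : 0 ≤ bk) (hF : 0 ≤ F)
    (h1 : Vfun E m ≤ 2*bk) (h2 : m + t' ≤ bk) (h3 : Vfun (E-1) t' ≤ 2*F) :
    Vfun E (m + t') ≤ 2*(bk + F) := by
  rcases le_or_gt m 0 with hm | hm
  · have s1 := Vfun_step E hE (m + t')
    have s2 : Vfun (E-1) (m + t') ≤ Vfun (E-1) t' := Vfun_mono _ (by linarith)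
    have s3 : max (m + t') 0 ≤ bk := max_le h2 hbk
    linarith
  · have := Vfun_super E hE m t' hm
    linarith

open Finset

theorem Vfun_of_nonpos (D : ℕ) {t : ℤ} (h : t ≤ 0) : Vfun D t = 0 := by
  unfold Vfun
  rw [min_eq_left (by linarith [Nat.cast_nonneg (α := ℤ) D] : t ≤ (D:ℤ)+1),
    max_eq_left h]
  ring

theorem Vfun_zero_one : Vfun 0 1 = 2 := by norm_num [Vfun]

theorem shad_empty {n : ℕ} : shad (∅ : Finset (Fin n → ℕ)) = ∅ := by
  simp [shad]

theorem kkw (n : ℕ) : ∀ (D : ℕ) (B : Finset (Fin n → ℕ)),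
    (∀ μ ∈ B, dsum μ = D) →
    Vfun D ((B.card : ℤ) - ((shad B).card : ℤ)) ≤ 2 * (B.card : ℤ) := by
  induction n with
  | zero =>
    intro D B hB
    rcases Finset.eq_empty_or_nonempty B with rfl | ⟨μ, hμ⟩
    · rw [shad_empty]
      simp [Vfun_of_nonpos]
    · haveI : Subsingleton (Fin 0 → ℕ) := ⟨fun a b => funext fun j => j.elim0⟩
      have hBsub : B = {μ} := by
        apply Finset.eq_singleton_iff_unique_mem.2
        exact ⟨hμ, fun x _ => Subsingleton.elim x μ⟩
      have hD : D = 0 := by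
        have := hB μ hμ
        unfold dsum at this
        simpa using this.symm
      have hsh : shad B = ∅ := by
        apply Finset.eq_empty_iff_forall_notMem.2
        intro ν hν
        rcases mem_shad_iff.1 hν with ⟨l, -⟩
        exact l.elim0
      subst hD
      rw [hBsub] at hsh ⊢; rw [hsh]
      simpa using Vfun_zero_one.le
  | succ n ih =>
    intro D B hB
    rcases Finset.eq_empty_or_nonempty B with rfl | hBne
    · rw [shad_empty]
      simp [Vfun_of_nonpos]
    rcases Nat.eq_zero_or_pos D with rfl | hD
    · -- all elements are the zero function
      obtain ⟨μ0, hμ0⟩ := hBne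
      have hBsub : B = {μ0} := by
        apply Finset.eq_singleton_iff_unique_mem.2
        refine ⟨hμ0, fun x hx => funext fun j => ?_⟩
        have h1 := hB x hx
        have h2 := hB μ0 hμ0
        unfold dsum at h1 h2
        have hx1 : x j = 0 := by
          have : x j ≤ ∑ j, x j := Finset.single_le_sum (fun _ _ => Nat.zero_le _) (Finset.mem_univ _)
          omega
        have hx2 : μ0 j = 0 := by
          have : μ0 j ≤ ∑ j, μ0 j := Finset.single_le_sum (fun _ _ => Nat.zero_le _) (Finset.mem_univ _)
          omega
        rw [hx1, hx2]
      have hsh : shad B = ∅ := by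
        apply Finset.eq_empty_iff_forall_notMem.2
        intro ν hν
        have := dsum_shad hB hν
        omega
      rw [hBsub] at hsh ⊢; rw [hsh]
      simpa using Vfun_zero_one.le
    -- main case : D ≥ 1 and n+1 variables
    set β : ℕ → ℤ := fun k => ((slc B k).card : ℤ) with hβ
    set S : ℕ → ℤ := fun k => ((shad (slc B k)).card : ℤ) with hS
    set σf : ℕ → ℤ := fun k => ((slc (shad B) k).card : ℤ) with hσf
    set mm : ℕ → ℤ := fun k => β k - max (S k) (β (k+1)) with hmm
    set T : ℕ → ℤ := fun k => (∑ k' ∈ Finset.Ico k D, mm k') + β D with hT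
    set G : ℕ → ℤ := fun k => ∑ k' ∈ Finset.Ico k (D+1), β k' with hG
    have hβ0 : ∀ k, 0 ≤ β k := fun k => Int.natCast_nonneg _
    have hG0 : ∀ k, 0 ≤ G k := fun k => Finset.sum_nonneg (fun _ _ => hβ0 _)
    have f1 : (B.card : ℤ) = ∑ k ∈ Finset.range (D+1), β k := by
      rw [card_slc_sum B D hB]
      push_cast
      rfl
    have f2 : ((shad B).card : ℤ) = ∑ k ∈ Finset.range D, σf k := by
      have h1 : ∀ μ ∈ shad B, dsum μ = D - 1 := by
        intro μ hμ
        have := dsum_shad hB hμ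
        omega
      rw [card_slc_sum (shad B) (D-1) h1]
      have : D - 1 + 1 = D := by omega
      rw [this]
      push_cast
      rfl
    have f3a : ∀ k, S k ≤ σf k := fun k =>
      Int.ofNat_le.2 (Finset.card_le_card (shad_slc_subset B k))
    have f3b : ∀ k, β (k+1) ≤ σf k := fun k =>
      Int.ofNat_le.2 (Finset.card_le_card (slc_succ_subset B k))
    have f4 : ∀ k, k ≤ D → Vfun (D - k) (β k - S k) ≤ 2 * β k := by
      intro k hk
      apply ih (D - k) (slc B k)
      intro ν hν
      have h1 := hB _ (mem_slc_iff.1 hν)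
      rw [dsum_snoc] at h1
      omega
    have hsplitT : ∀ k, k < D → T k = mm k + T (k+1) := by
      intro k hk
      rw [hT]
      simp only
      rw [Finset.sum_eq_sum_Ico_succ_bot hk]
      ring
    have hsplitG : ∀ k, k < D + 1 → G k = β k + G (k+1) := by
      intro k hk
      rw [hG]
      simp only
      rw [Finset.sum_eq_sum_Ico_succ_bot hk]
    have L1 : ∀ j, j ≤ D → T (D - j) ≤ β (D - j) := by
      intro j
      induction j with
      | zero =>
        intro _
        simp only [Nat.sub_zero, hT, Finset.Ico_self, Finset.sum_empty, zero_add, le_refl]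
      | succ j ihj =>
        intro hj
        have hk : D - (j+1) < D := by omega
        have hk1 : D - (j+1) + 1 = D - j := by omega
        rw [hsplitT _ hk, hk1]
        have h1 : mm (D - (j+1)) ≤ β (D - (j+1)) - β (D - (j+1) + 1) := by
          rw [hmm]
          simp only
          have := le_max_right (S (D - (j+1))) (β (D - (j+1) + 1))
          linarith
        rw [hk1] at h1
        have h2 := ihj (by omega)
        linarith
    have L2 : ∀ j, j ≤ D → Vfun j (T (D - j)) ≤ 2 * G (D - j) := by
      intro j
      induction j with
      | zero =>
        intro _
        have hTD : T D = β D := by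
          simp only [hT, Finset.Ico_self, Finset.sum_empty, zero_add]
        have hGD : G D = β D := by
          rw [hG]
          simp only
          rw [Finset.sum_eq_sum_Ico_succ_bot (by omega : D < D + 1)]
          simp
        simp only [Nat.sub_zero]
        rw [hTD, hGD]
        rcases le_or_gt (β D) 0 with h | h
        · rw [Vfun_of_nonpos 0 (by linarith : β D ≤ 0)]
          linarith [hβ0 D]
        · have h1 : (1:ℤ) ≤ β D := h
          have h2 := Vfun_le_max 0 (β D)
          push_cast at h2
          linarith
      | succ j ihj =>
        intro hj
        set k := D - (j+1) with hk
        have hkD : k < D := by omega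
        have hk1 : k + 1 = D - j := by omega
        rw [hsplitT _ hkD, hsplitG _ (by omega)]
        have hcore := core (j+1) (by omega) (mm k) (T (k+1)) (β k) (G (k+1))
          (hβ0 k) (hG0 (k+1)) ?_ ?_ ?_
        · simpa using hcore
        · -- Vfun (j+1) (mm k) ≤ 2 * β k
          have h1 : mm k ≤ β k - S k := by
            rw [hmm]
            simp only
            have := le_max_left (S k) (β (k+1))
            linarith
          have h2 : D - k = j + 1 := by omega
          calc Vfun (j+1) (mm k) ≤ Vfun (j+1) (β k - S k) := Vfun_mono _ h1
            _ ≤ 2 * β k := by rw [← h2]; exact f4 k (by omega)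
        · -- mm k + T (k+1) ≤ β k
          have := L1 (j+1) hj
          rw [← hk] at this
          rw [← hsplitT _ hkD]
          exact this
        · -- Vfun j (T (k+1)) ≤ 2 * G (k+1)
          have := ihj (by omega)
          rw [← hk1] at this
          simpa using this
    have final := L2 D le_rfl
    simp only [Nat.sub_self] at final
    have hT0 : (B.card : ℤ) - ((shad B).card : ℤ) ≤ T 0 := by
      rw [hT, f1, f2]
      simp only [hmm]
      rw [Finset.sum_sub_distrib]
      have h1 : ∑ k ∈ Finset.range (D+1), β k
          = (∑ k ∈ Finset.range D, β k) + β D := Finset.sum_range_succ _ _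
      have h2 : ∑ k ∈ Finset.range D, max (S k) (β (k+1)) ≤ ∑ k ∈ Finset.range D, σf k :=
        Finset.sum_le_sum (fun k _ => max_le (f3a k) (f3b k))
      have h3 : Finset.Ico 0 D = Finset.range D := by
        rw [Finset.range_eq_Ico]
      rw [h3]
      linarith
    have hG00 : G 0 = (B.card : ℤ) := by
      rw [hG, f1]
      simp only
      rw [Finset.range_eq_Ico]
    calc Vfun D ((B.card : ℤ) - ((shad B).card : ℤ)) ≤ Vfun D (T 0) := Vfun_mono _ hT0
      _ ≤ 2 * G 0 := final
      _ = 2 * (B.card : ℤ) := by rw [hG00]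

end KKW


open MvPolynomial Module

namespace PartA

variable {mv : ℕ}

noncomputable abbrev mo : MonomialOrder (Fin mv) := MonomialOrder.lex

/-- leading monomial (in the synonym type), `⊥` for the zero polynomial -/
noncomputable def lmo (f : MvPolynomial (Fin mv) ℂ) : WithBot (mo (mv := mv)).syn :=
  (f.support.image (mo (mv := mv)).toSyn).max

theorem lmo_eq_bot {f : MvPolynomial (Fin mv) ℂ} : lmo f = ⊥ ↔ f = 0 := by
  unfold lmo
  rw [Finset.max_eq_bot, Finset.image_eq_empty, MvPolynomial.support_eq_empty]

theorem lmo_mem {f : MvPolynomial (Fin mv) ℂ} {μ : (mo (mv := mv)).syn}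
    (h : lmo f = ↑μ) : (mo (mv := mv)).toSyn.symm μ ∈ f.support := by
  have h1 : μ ∈ f.support.image (mo (mv := mv)).toSyn := Finset.mem_of_max h
  rcases Finset.mem_image.1 h1 with ⟨τ, hτ, rfl⟩
  simpa using hτ

theorem lmo_le {f : MvPolynomial (Fin mv) ℂ} {τ : Fin mv →₀ ℕ} (h : τ ∈ f.support) :
    (↑((mo (mv := mv)).toSyn τ) : WithBot (mo (mv := mv)).syn) ≤ lmo f :=
  Finset.le_max (Finset.mem_image_of_mem _ h)

/-- set of leading monomials of nonzero elements of a submodule -/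
def LMS (W : Submodule ℂ (MvPolynomial (Fin mv) ℂ)) : Set (mo (mv := mv)).syn :=
  {μ | ∃ f ∈ W, lmo f = ↑μ}

theorem LMS_mono {W W' : Submodule ℂ (MvPolynomial (Fin mv) ℂ)} (h : W ≤ W') :
    LMS W ⊆ LMS W' := by
  rintro μ ⟨f, hf, hlm⟩
  exact ⟨f, h hf, hlm⟩

theorem LMS_finite (W : Submodule ℂ (MvPolynomial (Fin mv) ℂ)) [FiniteDimensional ℂ W] :
    (LMS W).Finite := by
  obtain ⟨s, hs⟩ := (Submodule.fg_iff_finiteDimensional W).2 ‹_›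
  have hsupp : ∀ f ∈ W, f.support ⊆ s.biUnion (fun g => g.support) := by
    intro f hf
    rw [← hs] at hf
    induction hf using Submodule.span_induction with
    | mem g hg => exact fun τ hτ => Finset.mem_biUnion.2 ⟨g, hg, hτ⟩
    | zero => simp
    | add g h _ _ ihg ihh =>
      exact fun τ hτ => by
        rcases Finset.mem_union.1 (MvPolynomial.support_add hτ) with h' | h'
        · exact ihg h'
        · exact ihh h'
    | smul c g _ ihg => exact fun τ hτ => ihg (MvPolynomial.support_smul hτ)
  apply Set.Finite.subset (Set.finite_range (fun τ : (s.biUnion (fun g => g.support)) =>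
    (mo (mv := mv)).toSyn τ.1))
  rintro μ ⟨f, hf, hlm⟩
  have h1 := lmo_mem hlm
  have h2 := hsupp f hf h1
  exact ⟨⟨_, h2⟩, by simp⟩

theorem LMS_ncard (k : ℕ) : ∀ (W : Submodule ℂ (MvPolynomial (Fin mv) ℂ))
    [FiniteDimensional ℂ W], finrank ℂ W = k → (LMS W).ncard = k := by
  induction k with
  | zero =>
    intro W _ hk
    have hW : W = ⊥ := Submodule.finrank_eq_zero.1 hk
    subst hW
    have : LMS (⊥ : Submodule ℂ (MvPolynomial (Fin mv) ℂ)) = ∅ := by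
      apply Set.eq_empty_iff_forall_notMem.2
      rintro μ ⟨f, hf, hlm⟩
      rw [Submodule.mem_bot] at hf
      subst hf
      rw [lmo_eq_bot.2 rfl] at hlm
      exact (WithBot.bot_ne_coe hlm)
    rw [this, Set.ncard_empty]
  | succ k ihk =>
    intro W _ hk
    have hWne : W ≠ ⊥ := by
      intro h
      rw [h, finrank_bot] at hk
      omega
    obtain ⟨f0, hf0W, hf0⟩ := Submodule.exists_mem_ne_zero_of_ne_bot hWne
    have hfin := LMS_finite W
    have hne : (LMS W).Nonempty := by
      have h1 : lmo f0 ≠ ⊥ := fun h => hf0 (lmo_eq_bot.1 h)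
      obtain ⟨μ, hμ⟩ := WithBot.ne_bot_iff_exists.1 h1
      exact ⟨μ, f0, hf0W, hμ.symm⟩
    have hne' : hfin.toFinset.Nonempty := by rwa [Set.Finite.toFinset_nonempty]
    set μs := hfin.toFinset.max' hne' with hμs
    have hμsW : μs ∈ LMS W := by
      have := Finset.max'_mem hfin.toFinset hne'
      rwa [Set.Finite.mem_toFinset] at this
    obtain ⟨fs, hfsW, hfslm⟩ := hμsW
    -- the functional
    set φ := (MvPolynomial.lcoeff ℂ ((mo (mv := mv)).toSyn.symm μs)).comp W.subtype with hφ
    have hφfs : φ ⟨fs, hfsW⟩ ≠ 0 := by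
      have := lmo_mem hfslm
      rw [MvPolynomial.mem_support_iff] at this
      simpa [hφ, MvPolynomial.lcoeff] using this
    have hrange : LinearMap.range φ = ⊤ := by
      rw [LinearMap.range_eq_top]
      intro c
      refine ⟨(c * (φ ⟨fs, hfsW⟩)⁻¹) • ⟨fs, hfsW⟩, ?_⟩
      rw [map_smul]
      rw [smul_eq_mul, mul_assoc, inv_mul_cancel₀ hφfs, mul_one]
    have hker : finrank ℂ (LinearMap.ker φ) = k := by
      have h1 := LinearMap.finrank_range_add_finrank_ker φ
      rw [hrange, finrank_top, hk] at h1
      simp only [finrank_self] at h1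
      omega
    set W' := (LinearMap.ker φ).map W.subtype with hW'
    have hW'le : W' ≤ W := Submodule.map_subtype_le _ _
    haveI : FiniteDimensional ℂ W' := Submodule.finiteDimensional_of_le hW'le
    have hW'rank : finrank ℂ W' = k := by
      rw [hW', Submodule.finrank_map_subtype_eq]
      exact hker
    have hmemW' : ∀ g, g ∈ W' ↔ g ∈ W ∧
        MvPolynomial.coeff ((mo (mv := mv)).toSyn.symm μs) g = 0 := by
      intro g
      constructor
      · rintro hg
        rcases Submodule.mem_map.1 hg with ⟨y, hy, rfl⟩
        refine ⟨y.2, ?_⟩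
        have : φ y = 0 := hy
        simpa [hφ, MvPolynomial.lcoeff] using this
      · rintro ⟨hgW, hgc⟩
        exact Submodule.mem_map.2 ⟨⟨g, hgW⟩, by simpa [hφ, MvPolynomial.lcoeff] using hgc, rfl⟩
    have hLMS : LMS W = insert μs (LMS W') := by
      ext ν
      constructor
      · rintro ⟨g, hgW, hglm⟩
        rcases eq_or_ne ν μs with rfl | hν
        · exact Set.mem_insert _ _
        · apply Set.mem_insert_of_mem
          refine ⟨g, (hmemW' g).2 ⟨hgW, ?_⟩, hglm⟩
          -- coeff μs g = 0 since lmo g = ν < μs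
          by_contra hc
          have h1 : μs ∈ g.support.image (mo (mv := mv)).toSyn := by
            apply Finset.mem_image.2
            refine ⟨_, MvPolynomial.mem_support_iff.2 hc, by simp⟩
          have h2 : (↑μs : WithBot _) ≤ lmo g := Finset.le_max h1
          have h3 : ν ≤ μs := by
            apply Finset.le_max' hfin.toFinset
            rw [Set.Finite.mem_toFinset]
            exact ⟨g, hgW, hglm⟩
          rw [hglm] at h2
          have h4 : μs ≤ ν := by exact_mod_cast h2
          exact hν (le_antisymm h3 h4)
      · rintro h
        rcases Set.mem_insert_iff.1 h with rfl | ⟨g, hgW', hglm⟩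
        · exact ⟨fs, hfsW, hfslm⟩
        · exact ⟨g, hW'le hgW', hglm⟩
    have hnotmem : μs ∉ LMS W' := by
      rintro ⟨g, hgW', hglm⟩
      have h1 := lmo_mem hglm
      rw [MvPolynomial.mem_support_iff] at h1
      exact h1 ((hmemW' g).1 hgW').2
    rw [hLMS, Set.ncard_insert_of_notMem hnotmem (Set.Finite.subset (LMS_finite W)
      (by rw [hLMS]; exact Set.subset_insert _ _))]
    rw [ihk W' hW'rank]





/-- degree-`i` homogeneous part -/
noncomputable abbrev HS (i : ℕ) : Submodule ℂ (MvPolynomial (Fin mv) ℂ) :=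
  homogeneousSubmodule (Fin mv) ℂ i

/-- degree-`i` part of the ideal -/
noncomputable abbrev UU (I : Ideal (MvPolynomial (Fin mv) ℂ)) (i : ℕ) :
    Submodule ℂ (MvPolynomial (Fin mv) ℂ) :=
  HS i ⊓ (Submodule.restrictScalars ℂ I)

theorem HS_fd (i : ℕ) : FiniteDimensional ℂ (HS (mv := mv) i) := by
  apply Submodule.finiteDimensional_of_le (S₂ := MvPolynomial.restrictTotalDegree (Fin mv) ℂ i)
  intro f hf
  rw [MvPolynomial.mem_restrictTotalDegree]
  exact MvPolynomial.IsHomogeneous.totalDegree_le hf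

theorem UU_fd (I : Ideal (MvPolynomial (Fin mv) ℂ)) (i : ℕ) :
    FiniteDimensional ℂ (UU (mv := mv) I i) := by
  haveI := HS_fd (mv := mv) i
  exact Submodule.finiteDimensional_of_le inf_le_left

/-- the count formula : finrank of image in the quotient -/
theorem hilb_eq (I : Ideal (MvPolynomial (Fin mv) ℂ)) (i : ℕ) :
    finrank ℂ ((homogeneousSubmodule (Fin mv) ℂ i).map
        (Ideal.Quotient.mkₐ ℂ I).toLinearMap) + finrank ℂ (UU (mv := mv) I i)
      = finrank ℂ (HS (mv := mv) i) := by
  haveI := HS_fd (mv := mv) i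
  set g := (Ideal.Quotient.mkₐ ℂ I).toLinearMap with hg
  set φ := g.comp (HS (mv := mv) i).subtype with hφ
  have h1 : LinearMap.range φ = (homogeneousSubmodule (Fin mv) ℂ i).map g := by
    rw [hφ, LinearMap.range_comp, Submodule.range_subtype]
  have h2 : LinearMap.ker g = Submodule.restrictScalars ℂ I := by
    ext f
    simp only [LinearMap.mem_ker, Submodule.restrictScalars_mem]
    rw [hg]
    show Ideal.Quotient.mkₐ ℂ I f = 0 ↔ _
    rw [Ideal.Quotient.mkₐ_eq_mk]
    exact Ideal.Quotient.eq_zero_iff_mem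
  have h3 : LinearMap.ker φ = Submodule.comap (HS (mv := mv) i).subtype
      (Submodule.restrictScalars ℂ I) := by
    rw [hφ, LinearMap.ker_comp, h2]
  have h4 : finrank ℂ (LinearMap.ker φ) = finrank ℂ (UU (mv := mv) I i) := by
    rw [h3, ← Submodule.finrank_map_subtype_eq (HS (mv := mv) i), Submodule.map_comap_subtype]
  have h5 := LinearMap.finrank_range_add_finrank_ker φ
  rw [h1, h4] at h5
  exact h5

/-- leading monomials of the homogeneous part are exactly degree-`i` monomials -/
theorem LMS_HS (i : ℕ) : LMS (HS (mv := mv) i)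
    = {μ : (mo (mv := mv)).syn | ((mo (mv := mv)).toSyn.symm μ).degree = i} := by
  ext μ
  constructor
  · rintro ⟨f, hf, hlm⟩
    have h1 := lmo_mem hlm
    rw [MvPolynomial.mem_support_iff] at h1
    have h2 := (MvPolynomial.mem_homogeneousSubmodule _ _).1 hf h1
    rw [Set.mem_setOf_eq, Finsupp.degree_eq_weight_one]
    exact h2
  · intro hμ
    refine ⟨MvPolynomial.monomial ((mo (mv := mv)).toSyn.symm μ) 1, ?_, ?_⟩
    · rw [MvPolynomial.mem_homogeneousSubmodule]
      exact MvPolynomial.isHomogeneous_monomial 1 hμ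
    · unfold lmo
      rw [MvPolynomial.support_monomial, if_neg (one_ne_zero)]
      simp

/-- multiplying by a monomial translates the leading monomial -/
theorem down_closed (I : Ideal (MvPolynomial (Fin mv) ℂ)) (a τ : Fin mv →₀ ℕ)
    (h : (mo (mv := mv)).toSyn a ∈ LMS (UU (mv := mv) I a.degree)) :
    (mo (mv := mv)).toSyn (a + τ) ∈ LMS (UU (mv := mv) I (a + τ).degree) := by
  obtain ⟨f, hf, hlm⟩ := h
  have hfI : f ∈ I := hf.2
  have hfH : f.IsHomogeneous a.degree := hf.1
  have hfne : f ≠ 0 := by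
    intro h0
    rw [lmo_eq_bot.2 h0] at hlm
    exact WithBot.bot_ne_coe hlm
  set g := MvPolynomial.monomial τ (1:ℂ) * f with hgdef
  have hgI : g ∈ I := Ideal.mul_mem_left _ _ hfI
  have hgH : g.IsHomogeneous (τ.degree + a.degree) := by
    apply MvPolynomial.IsHomogeneous.mul _ hfH
    exact MvPolynomial.isHomogeneous_monomial 1 rfl
  have hdeg : (a + τ).degree = τ.degree + a.degree := by
    rw [Finsupp.degree_eq_weight_one, map_add]
    exact add_comm _ _
  -- support of g
  have hsupp : g.support = f.support.image (fun σ' => τ + σ') := by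
    ext σ'
    rw [MvPolynomial.mem_support_iff, Finset.mem_image, hgdef,
      MvPolynomial.coeff_monomial_mul']
    constructor
    · intro hc
      by_cases hle : τ ≤ σ'
      · rw [if_pos hle, one_mul] at hc
        exact ⟨σ' - τ, MvPolynomial.mem_support_iff.2 hc, add_tsub_cancel_of_le hle⟩
      · rw [if_neg hle] at hc
        exact absurd rfl hc
    · rintro ⟨σ'', hσ'', rfl⟩
      rw [if_pos (self_le_add_right τ σ''), one_mul, add_tsub_cancel_left]
      exact MvPolynomial.mem_support_iff.1 hσ''
  -- leading monomial of g
  have hsne : f.support.Nonempty := by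
    rwa [MvPolynomial.support_nonempty]
  have h1 : (f.support.image (mo (mv := mv)).toSyn).Nonempty := hsne.image _
  have hmax' : (f.support.image (mo (mv := mv)).toSyn).max' h1 = (mo (mv := mv)).toSyn a := by
    have hc := Finset.coe_max' h1
    have hlm' : (f.support.image (mo (mv := mv)).toSyn).max
        = ((mo (mv := mv)).toSyn a : WithBot _) := hlm
    rw [hlm'] at hc
    exact_mod_cast hc
  have h2 : g.support.image (mo (mv := mv)).toSyn
      = (f.support.image (mo (mv := mv)).toSyn).image
        (fun x => (mo (mv := mv)).toSyn τ + x) := by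
    rw [hsupp, Finset.image_image, Finset.image_image]
    apply Finset.image_congr
    intro σ' _
    simp only [Function.comp_apply, map_add]
  have hmono : Monotone (fun x : (mo (mv := mv)).syn => (mo (mv := mv)).toSyn τ + x) :=
    fun x y hxy => add_le_add le_rfl hxy
  have h3 : ((f.support.image (mo (mv := mv)).toSyn).image
      (fun x => (mo (mv := mv)).toSyn τ + x)).Nonempty := h1.image _
  have hlmg : lmo g = ↑((mo (mv := mv)).toSyn (a + τ)) := by
    unfold lmo
    rw [h2, ← Finset.coe_max' h3, Finset.max'_image hmono _ h3]
    have hof : h3.of_image = h1 := rfl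
    rw [hof, hmax', ← map_add, add_comm τ a]
  refine ⟨g, ⟨?_, by exact hgI⟩, hlmg⟩
  show g ∈ homogeneousSubmodule (Fin mv) ℂ ((a + τ).degree)
  rw [MvPolynomial.mem_homogeneousSubmodule, hdeg]
  exact hgH




/-- the set of standard monomials of degree `i` (in the order-synonym world) -/
noncomputable def ΛL (I : Ideal (MvPolynomial (Fin mv) ℂ)) (i : ℕ) : Set (mo (mv := mv)).syn :=
  LMS (HS (mv := mv) i) \ LMS (UU (mv := mv) I i)

theorem ΛL_finite (I : Ideal (MvPolynomial (Fin mv) ℂ)) (i : ℕ) : (ΛL (mv := mv) I i).Finite := by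
  haveI := HS_fd (mv := mv) i
  exact Set.Finite.subset (LMS_finite _) Set.diff_subset

theorem card_ΛL (I : Ideal (MvPolynomial (Fin mv) ℂ)) (i : ℕ) :
    (ΛL (mv := mv) I i).ncard
      = finrank ℂ ((homogeneousSubmodule (Fin mv) ℂ i).map
          (Ideal.Quotient.mkₐ ℂ I).toLinearMap) := by
  haveI := HS_fd (mv := mv) i
  haveI := UU_fd (mv := mv) I i
  have hHS : (LMS (HS (mv := mv) i)).ncard = finrank ℂ (HS (mv := mv) i) :=
    LMS_ncard _ _ rfl
  have hUU : (LMS (UU (mv := mv) I i)).ncard = finrank ℂ (UU (mv := mv) I i) :=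
    LMS_ncard _ _ rfl
  have hsub : LMS (UU (mv := mv) I i) ⊆ LMS (HS (mv := mv) i) := LMS_mono inf_le_left
  have hdiff := Set.ncard_diff hsub (Set.Finite.subset (LMS_finite _) hsub)
  have hle : (LMS (UU (mv := mv) I i)).ncard ≤ (LMS (HS (mv := mv) i)).ncard :=
    Set.ncard_le_ncard hsub (LMS_finite _)
  have heq := hilb_eq (mv := mv) I i
  unfold ΛL
  omega

/-- the standard monomials as exponent functions -/
noncomputable def ΛF (I : Ideal (MvPolynomial (Fin mv) ℂ)) (i : ℕ) : Finset (Fin mv → ℕ) :=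
  (ΛL_finite I i).toFinset.image (fun μ => ⇑((mo (mv := mv)).toSyn.symm μ))

theorem card_ΛF (I : Ideal (MvPolynomial (Fin mv) ℂ)) (i : ℕ) :
    (ΛF (mv := mv) I i).card
      = finrank ℂ ((homogeneousSubmodule (Fin mv) ℂ i).map
          (Ideal.Quotient.mkₐ ℂ I).toLinearMap) := by
  rw [← card_ΛL (mv := mv) I i]
  unfold ΛF
  rw [Finset.card_image_of_injective _ (by
    intro x y hxy
    have h1 : ((mo (mv := mv)).toSyn.symm x : Fin mv →₀ ℕ) = (mo (mv := mv)).toSyn.symm y :=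
      DFunLike.coe_injective hxy
    exact ((mo (mv := mv)).toSyn.symm.injective h1))]
  rw [Set.ncard_eq_toFinset_card _ (ΛL_finite I i)]

theorem dsum_coe (b : Fin mv →₀ ℕ) : KKW.dsum ⇑b = b.degree := by
  unfold KKW.dsum Finsupp.degree
  exact (Finset.sum_subset (Finset.subset_univ _)
    (fun j _ hj => Finsupp.notMem_support_iff.1 hj)).symm

theorem mem_ΛF_iff (I : Ideal (MvPolynomial (Fin mv) ℂ)) (i : ℕ) (b : Fin mv →₀ ℕ) :
    ⇑b ∈ ΛF (mv := mv) I i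
      ↔ (b.degree = i ∧ (mo (mv := mv)).toSyn b ∉ LMS (UU (mv := mv) I i)) := by
  unfold ΛF
  rw [Finset.mem_image]
  constructor
  · rintro ⟨μ, hμ, hcoe⟩
    rw [Set.Finite.mem_toFinset] at hμ
    have h1 : ((mo (mv := mv)).toSyn.symm μ : Fin mv →₀ ℕ) = b := DFunLike.coe_injective hcoe
    have h2 : μ = (mo (mv := mv)).toSyn b := by rw [← h1]; simp
    rcases hμ with ⟨hμHS, hμUU⟩
    rw [LMS_HS] at hμHS
    rw [h2] at hμUU
    refine ⟨?_, hμUU⟩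
    rw [← h1]
    exact hμHS
  · rintro ⟨hdeg, hnot⟩
    refine ⟨(mo (mv := mv)).toSyn b, ?_, by simp⟩
    rw [Set.Finite.mem_toFinset]
    refine ⟨?_, hnot⟩
    rw [LMS_HS]
    simpa using hdeg

theorem dsum_mem_ΛF (I : Ideal (MvPolynomial (Fin mv) ℂ)) (i : ℕ) :
    ∀ x ∈ ΛF (mv := mv) I i, KKW.dsum x = i := by
  intro x hx
  unfold ΛF at hx
  rcases Finset.mem_image.1 hx with ⟨μ, hμ, rfl⟩
  rw [Set.Finite.mem_toFinset] at hμ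
  rcases hμ with ⟨hμHS, -⟩
  rw [LMS_HS] at hμHS
  rw [dsum_coe]
  exact hμHS

theorem shad_ΛF (I : Ideal (MvPolynomial (Fin mv) ℂ)) (i : ℕ) :
    KKW.shad (ΛF (mv := mv) I (i+1)) ⊆ ΛF (mv := mv) I i := by
  intro ν hν
  rcases KKW.mem_shad_iff.1 hν with ⟨l, hup⟩
  set x := Function.update ν l (ν l + 1) with hx
  set b' : Fin mv →₀ ℕ := Finsupp.equivFunOnFinite.symm x with hb'
  set a : Fin mv →₀ ℕ := Finsupp.equivFunOnFinite.symm ν with ha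
  have hcoeb' : ⇑b' = x := Finsupp.equivFunOnFinite.apply_symm_apply x
  have hcoea : ⇑a = ν := Finsupp.equivFunOnFinite.apply_symm_apply ν
  rw [← hcoeb'] at hup
  rcases (mem_ΛF_iff I (i+1) b').1 hup with ⟨hdegb', hnotb'⟩
  have hab : a ≤ b' := by
    rw [Finsupp.le_def]
    intro j
    rw [show a j = ν j from congrFun hcoea j, show b' j = x j from congrFun hcoeb' j, hx]
    rcases eq_or_ne j l with rfl | hj
    · rw [Function.update_self]; omega
    · rw [Function.update_of_ne hj]
  have hsum : b' = a + (b' - a) := (add_tsub_cancel_of_le hab).symm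
  have hdega : a.degree = i := by
    have h1 : KKW.dsum x = KKW.dsum ν + 1 := KKW.dsum_update_succ ν l
    have h2 : KKW.dsum x = i + 1 := by rw [← hcoeb', dsum_coe, hdegb']
    have h3 : KKW.dsum ν = i := by omega
    rw [← hcoea] at h3
    rw [← dsum_coe]
    exact h3
  have hnota : (mo (mv := mv)).toSyn a ∉ LMS (UU (mv := mv) I i) := by
    intro hin
    rw [← hdega] at hin
    have := down_closed I a (b' - a) hin
    rw [← hsum, hdegb'] at this
    exact hnotb' this
  rw [← hcoea]
  exact (mem_ΛF_iff I i a).2 ⟨hdega, hnota⟩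

end PartA


/-- Hilbert function of the subscheme of `ℙʳ` cut out by the homogeneous ideal `I`:
dimension of the degree-`i` piece of the homogeneous coordinate ring. -/
noncomputable def hilb {m : ℕ} (I : Ideal (MvPolynomial (Fin m) ℂ)) (i : ℕ) : ℕ :=
  Module.finrank ℂ
    ((MvPolynomial.homogeneousSubmodule (Fin m) ℂ i).map
      (Ideal.Quotient.mkₐ ℂ I).toLinearMap)

theorem choose_two_mul (c : ℕ) : 2 * c.choose 2 = c * (c - 1) := by
  rw [Nat.choose_two_right, Nat.mul_div_cancel']
  rcases Nat.even_or_odd c with hc | hc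
  · exact hc.two_dvd.mul_right _
  · obtain ⟨k, rfl⟩ := hc
    apply Dvd.dvd.mul_left
    omega

/-- Lemma (planegenus): a projective scheme `C ⊆ ℙʳ` of dimension 1 and degree `d > 0`
(cut out by the homogeneous ideal `I`, with degree `d` and arithmetic genus
`p = 1 − χ(O_C)` read off from the Hilbert polynomial: `hilb I i = d·i + 1 − p` for
`i ≫ 0`) satisfies `p_a(C) ≤ (d−1 choose 2)`. -/
theorem stmt_4 (r : ℕ) (I : Ideal (MvPolynomial (Fin (r + 1)) ℂ))
    (hIhom : I.IsHomogeneous (MvPolynomial.homogeneousSubmodule (Fin (r + 1)) ℂ))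
    (d : ℕ) (hd : 0 < d) (p : ℤ)
    (hHilbPoly : ∃ N : ℕ, ∀ i ≥ N, (hilb I i : ℤ) = d * i + (1 - p)) :
    p ≤ ((d - 1).choose 2 : ℤ) := by
  obtain ⟨N, hN⟩ := hHilbPoly
  have hcard : ∀ i, ((PartA.ΛF (mv := r+1) I i).card : ℤ) = (hilb I i : ℤ) := by
    intro i
    have h := PartA.card_ΛF (mv := r+1) I i
    rw [h]
    rfl
  set i0 := N + d with hi0
  have hB1 : ((PartA.ΛF (mv := r+1) I (i0+1)).card : ℤ) = (d:ℤ) * ((i0:ℤ)+1) + (1 - p) := by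
    rw [hcard]
    have h := hN (i0+1) (by omega)
    push_cast at h ⊢
    linarith
  have hB0 : ((PartA.ΛF (mv := r+1) I i0).card : ℤ) = (d:ℤ) * (i0:ℤ) + (1 - p) := by
    rw [hcard]
    have h := hN i0 (by omega)
    push_cast at h ⊢
    linarith
  have hshad : ((KKW.shad (PartA.ΛF (mv := r+1) I (i0+1))).card : ℤ)
      ≤ ((PartA.ΛF (mv := r+1) I i0).card : ℤ) := by
    exact_mod_cast Finset.card_le_card (PartA.shad_ΛF (mv := r+1) I i0)
  have hkkw := KKW.kkw (r+1) (i0+1) (PartA.ΛF (mv := r+1) I (i0+1))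
    (PartA.dsum_mem_ΛF (mv := r+1) I (i0+1))
  have hdrop : (d:ℤ) ≤ ((PartA.ΛF (mv := r+1) I (i0+1)).card : ℤ)
      - ((KKW.shad (PartA.ΛF (mv := r+1) I (i0+1))).card : ℤ) := by
    rw [hB1]
    linarith
  have hmono := KKW.Vfun_mono (i0+1) hdrop
  have hVd : KKW.Vfun (i0+1) (d:ℤ) = (d:ℤ) * (2*((i0:ℤ)+1) + 3 - d) := by
    unfold KKW.Vfun
    have hdle : (d:ℤ) ≤ ((i0+1 : ℕ):ℤ) + 1 := by push_cast; omega
    rw [min_eq_left hdle, max_eq_right (by positivity)]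
    push_cast
    ring
  have hchain : (d:ℤ) * (2*((i0:ℤ)+1) + 3 - d) ≤ 2 * ((d:ℤ)*((i0:ℤ)+1) + (1 - p)) := by
    rw [← hVd, ← hB1]
    exact le_trans hmono hkkw
  have hq : 2 * p ≤ (d:ℤ)*(d:ℤ) - 3*(d:ℤ) + 2 := by nlinarith [hchain]
  -- conclude via binomial coefficient arithmetic
  rcases d with _ | d'
  · omega
  rcases d' with _ | e
  · -- d = 1
    push_cast at hq ⊢
    norm_num
    linarith
  · -- d = e + 2
    have hch : 2 * ((e+1).choose 2) = (e+1) * e := by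
      have := choose_two_mul (e+1)
      simpa using this
    have hgoal : ((e + 2 - 1 : ℕ).choose 2 : ℤ) = (((e+1).choose 2 : ℕ) : ℤ) := by
      norm_num
    rw [hgoal]
    have hch' : 2 * (((e+1).choose 2 : ℕ) : ℤ) = ((e:ℤ)+1) * e := by
      exact_mod_cast hch
    push_cast at hq
    linarith
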